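/- For every real number b ≥ 2, the inequality b^b ≤ 2^b · (b-1)^{b-1} holds; equivalently, b ≤ 2·(b-1)^{(b-1)/b}. -/

import Mathlib

open Real Set

lemma key_log (b : ℝ) (hb : 2 ≤ b) :
    b * Real.log b ≤ b * Real.log 2 + (b - 1) * Real.log (b - 1) := by
  set f : ℝ → ℝ := fun x => x * Real.log 2 + (x - 1) * Real.log (x - 1) - x * Real.log x with hf
  have hmono : MonotoneOn f (Set.Ici 2) := by
    have hderiv : ∀ x ∈ interior (Set.Ici (2:ℝ)),
        HasDerivAt f (Real.log 2 + Real.log (x - 1) - Real.log x) x := by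
      intro x hx
      rw [interior_Ici] at hx
      have hx2 : (2:ℝ) < x := hx
      have hx1 : x - 1 ≠ 0 := by nlinarith
      have hx0 : x ≠ 0 := by nlinarith
      have h1 : HasDerivAt (fun x : ℝ => x * Real.log 2) (Real.log 2) x := by
        simpa using (hasDerivAt_id x).mul_const (Real.log 2)
      have h2 : HasDerivAt (fun x : ℝ => (x - 1) * Real.log (x - 1))
          (Real.log (x - 1) + 1) x := by
        have := (Real.hasDerivAt_mul_log hx1).comp x
          ((hasDerivAt_id x).sub_const 1)
        simpa [Function.comp_def] using this
      have h3 : HasDerivAt (fun x : ℝ => x * Real.log x) (Real.log x + 1) x :=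
        Real.hasDerivAt_mul_log hx0
      have := (h1.add h2).sub h3
      exact this.congr_deriv (by ring)
    apply monotoneOn_of_deriv_nonneg (convex_Ici 2)
    · apply ContinuousOn.sub
      · apply ContinuousOn.add (by fun_prop)
        apply ContinuousOn.mul (by fun_prop)
        apply ContinuousOn.log (by fun_prop)
        intro x hx
        have : (2:ℝ) ≤ x := hx
        nlinarith
      · apply ContinuousOn.mul (by fun_prop)
        apply ContinuousOn.log (by fun_prop)
        intro x hx
        have : (2:ℝ) ≤ x := hx
        nlinarith
    · intro x hx
      exact ((hderiv x hx).differentiableAt).differentiableWithinAt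
    · intro x hx
      rw [(hderiv x hx).deriv]
      rw [interior_Ici] at hx
      have hx2 : (2:ℝ) < x := hx
      have h1 : Real.log 2 + Real.log (x - 1) = Real.log (2 * (x - 1)) := by
        rw [Real.log_mul (by norm_num) (by nlinarith)]
      rw [h1, sub_nonneg]
      apply Real.log_le_log (by nlinarith)
      nlinarith
  have h2 : f 2 ≤ f b := hmono (by simp) hb hb
  have hf2 : f 2 = 0 := by norm_num [hf]
  rw [hf2] at h2
  simp only [hf] at h2
  linarith

theorem inequality_e20 (b : ℝ) (hb : 2 ≤ b) :
    b ^ b ≤ 2 ^ b * (b - 1) ^ (b - 1) ∧ b ≤ 2 * (b - 1) ^ ((b - 1) / b) := by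
  have hb0 : (0:ℝ) < b := by linarith
  have hb1 : (0:ℝ) < b - 1 := by linarith
  have hlog := key_log b hb
  constructor
  · have h1 : b ^ b = Real.exp (b * Real.log b) := by
      rw [Real.rpow_def_of_pos hb0]; ring_nf
    have h2 : (2:ℝ) ^ b * (b - 1) ^ (b - 1)
        = Real.exp (b * Real.log 2 + (b - 1) * Real.log (b - 1)) := by
      rw [Real.rpow_def_of_pos (by norm_num : (0:ℝ) < 2),
        Real.rpow_def_of_pos hb1, ← Real.exp_add]; ring_nf
    rw [h1, h2]
    exact Real.exp_le_exp.mpr hlog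
  · have hx : (2 * (b - 1) ^ ((b - 1) / b)) ^ b = 2 ^ b * (b - 1) ^ (b - 1) := by
      rw [Real.mul_rpow (by norm_num) (Real.rpow_nonneg hb1.le _),
        ← Real.rpow_mul hb1.le]
      rw [div_mul_cancel₀ _ hb0.ne']
    have := (Real.rpow_le_rpow_iff hb0.le
      (by positivity : (0:ℝ) ≤ 2 * (b - 1) ^ ((b - 1) / b)) hb0).mp ?_
    · exact this
    · rw [hx]
      have h1 : b ^ b = Real.exp (b * Real.log b) := by
        rw [Real.rpow_def_of_pos hb0]; ring_nf
      have h2 : (2:ℝ) ^ b * (b - 1) ^ (b - 1)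
          = Real.exp (b * Real.log 2 + (b - 1) * Real.log (b - 1)) := by
        rw [Real.rpow_def_of_pos (by norm_num : (0:ℝ) < 2),
          Real.rpow_def_of_pos hb1, ← Real.exp_add]; ring_nf
      rw [h1, h2]
      exact Real.exp_le_exp.mpr hlog
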